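/- For every positive integer n, the sum of all entries of the inverse of the Cartan matrix C of type A_n equals n(n+1)(n+2)/12; equivalently, setting v = (1/(n+1))·C^{-1}·𝟙 where 𝟙 is the all-ones column vector, one has (1/2)·vᵀ C v = n(n+2) / (24(n+1)). -/

import Mathlib

open Matrix Finset

/-- The Cartan matrix of type `Aₙ`: the `n × n` rational matrix with `2` on the diagonal,
`-1` on the entries adjacent to the diagonal, and `0` elsewhere. -/
def cartanMatrixA (n : ℕ) : Matrix (Fin n) (Fin n) ℚ :=
  Matrix.of fun i j =>
    if i = j then 2
    else if (i : ℕ) + 1 = (j : ℕ) ∨ (j : ℕ) + 1 = (i : ℕ) then -1 else 0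

lemma tri (n : ℕ) (x : ℕ → ℚ) (hx0 : x 0 = 0) (hxn : x (n+1) = 0) (i : Fin n) :
    ∑ j : Fin n, cartanMatrixA n i j * x (j.val+1)
      = 2 * x (i.val+1) - x i.val - x (i.val+2) := by
  have key : ∀ j : Fin n, cartanMatrixA n i j * x (j.val+1)
      = (if (j : ℕ) = (i : ℕ) then 2 * x (i.val+1) else 0)
        + (if (j : ℕ) = i.val+1 then -x (i.val+2) else 0)
        + (if (j : ℕ)+1 = i.val then -x i.val else 0) := by
    intro j
    simp only [cartanMatrixA, Matrix.of_apply, Fin.ext_iff]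
    rcases eq_or_ne (j : ℕ) (i : ℕ) with h | h
    · rw [if_pos h.symm, if_pos h, if_neg (by omega), if_neg (by omega), h]
      ring
    · rw [if_neg (by omega)]
      rcases eq_or_ne (j : ℕ) (i.val+1) with h2 | h2
      · rw [if_pos (by omega), if_neg (by omega), if_pos h2, if_neg (by omega), h2]
        ring
      · rcases eq_or_ne ((j : ℕ)+1) i.val with h3 | h3
        · rw [if_pos (by omega), if_neg (by omega), if_neg (by omega), if_pos h3,
            show (j:ℕ)+1 = i.val from h3]
          ring
        · rw [if_neg (by omega), if_neg (by omega), if_neg (by omega), if_neg (by omega)]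
          ring
  rw [Finset.sum_congr rfl (fun j _ => key j)]
  rw [Finset.sum_add_distrib, Finset.sum_add_distrib]
  rw [Fin.sum_univ_eq_sum_range (fun m => if m = (i : ℕ) then 2 * x (i.val+1) else 0),
    Fin.sum_univ_eq_sum_range (fun m => if m = i.val+1 then -x (i.val+2) else 0),
    Fin.sum_univ_eq_sum_range (fun m => if m+1 = i.val then -x i.val else 0)]
  rw [Finset.sum_ite_eq' (Finset.range n) (i : ℕ) (fun _ => 2 * x (i.val+1)),
    Finset.sum_ite_eq' (Finset.range n) (i.val+1) (fun _ => -x (i.val+2))]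
  have hlt := i.isLt
  have h1 : (i : ℕ) ∈ Finset.range n := by simp [i.isLt]
  rw [if_pos h1]
  by_cases hi0 : i.val = 0
  · have hz : ∀ m ∈ Finset.range n, (if m+1 = i.val then -x i.val else 0) = 0 := by
      intro m _; rw [if_neg (by omega)]
    rw [Finset.sum_congr rfl hz, Finset.sum_const, smul_zero]
    by_cases hin : i.val + 1 < n
    · rw [if_pos (show i.val + 1 ∈ Finset.range n from Finset.mem_range.mpr (by omega)), hi0, hx0]; ring
    · have hn1 : n = 1 := by omega
      rw [if_neg (show ¬ i.val + 1 ∈ Finset.range n from fun hc => by rw [Finset.mem_range] at hc; omega), hi0, hx0, show (0:ℕ)+2 = n+1 by omega, hxn]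
      ring
  · have he : ∀ m ∈ Finset.range n, (if m+1 = i.val then -x i.val else 0)
        = (if m = i.val - 1 then -x i.val else 0) := by
      intro m _
      by_cases h : m + 1 = i.val
      · rw [if_pos h, if_pos (by omega)]
      · rw [if_neg h, if_neg (by omega)]
    rw [Finset.sum_congr rfl he,
      Finset.sum_ite_eq' (Finset.range n) (i.val - 1) (fun _ => -x i.val),
      if_pos (show i.val - 1 ∈ Finset.range n from Finset.mem_range.mpr (by omega))]
    by_cases hin : i.val + 1 < n
    · rw [if_pos (show i.val + 1 ∈ Finset.range n from Finset.mem_range.mpr (by omega))]; ring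
    · rw [if_neg (show ¬ i.val + 1 ∈ Finset.range n from fun hc => by rw [Finset.mem_range] at hc; omega), show i.val + 2 = n + 1 by omega, hxn]
      ring

noncomputable def gg (n a b : ℕ) : ℚ :=
  ((min a b : ℕ) : ℚ) * (((n : ℚ) + 1) - ((max a b : ℕ) : ℚ)) / ((n : ℚ) + 1)

lemma gg0 (n b : ℕ) : gg n 0 b = 0 := by simp [gg]

lemma ggn (n b : ℕ) (hb : b ≤ n + 1) : gg n (n+1) b = 0 := by
  unfold gg
  rw [Nat.max_eq_left hb]
  push_cast
  ring

noncomputable def BB (n : ℕ) : Matrix (Fin n) (Fin n) ℚ :=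
  Matrix.of fun i k => gg n (i.val+1) (k.val+1)

lemma hn1 (n : ℕ) : ((n : ℚ) + 1) ≠ 0 := by positivity

lemma hCB (n : ℕ) : cartanMatrixA n * BB n = 1 := by
  ext i k
  rw [Matrix.mul_apply]
  have : ∀ j : Fin n, cartanMatrixA n i j * BB n j k
      = cartanMatrixA n i j * (fun m => gg n m (k.val+1)) (j.val+1) := fun j => rfl
  rw [Finset.sum_congr rfl (fun j _ => this j),
    tri n (fun m => gg n m (k.val+1)) (gg0 n _) (ggn n _ (by omega)) i]
  have hne := hn1 n
  rcases Nat.lt_trichotomy i.val k.val with h | h | h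
  · rw [Matrix.one_apply_ne (by simp [Fin.ext_iff]; omega)]
    unfold gg
    rw [Nat.min_eq_left (by omega), Nat.min_eq_left (by omega), Nat.min_eq_left (by omega),
      Nat.max_eq_right (by omega), Nat.max_eq_right (by omega), Nat.max_eq_right (by omega)]
    push_cast
    field_simp
    ring
  · have hik : i = k := Fin.ext h
    subst hik
    rw [Matrix.one_apply_eq]
    unfold gg
    rw [Nat.min_eq_left (by omega), Nat.min_eq_left (by omega), Nat.min_eq_right (by omega),
      Nat.max_eq_left (by omega), Nat.max_eq_right (by omega), Nat.max_eq_left (by omega)]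
    push_cast
    field_simp
    ring
  · rw [Matrix.one_apply_ne (by simp [Fin.ext_iff]; omega)]
    unfold gg
    rw [Nat.min_eq_right (by omega), Nat.min_eq_right (by omega), Nat.min_eq_right (by omega),
      Nat.max_eq_left (by omega), Nat.max_eq_left (by omega), Nat.max_eq_left (by omega)]
    push_cast
    field_simp
    ring

def ff (n m : ℕ) : ℚ := (m : ℚ) * (((n : ℚ) + 1) - (m : ℚ)) / 2

def xv (n : ℕ) : Fin n → ℚ := fun i => ff n (i.val + 1)

lemma hCx (n : ℕ) : (cartanMatrixA n).mulVec (xv n) = 1 := by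
  funext i
  rw [Matrix.mulVec, dotProduct]
  have : ∀ j : Fin n, cartanMatrixA n i j * xv n j
      = cartanMatrixA n i j * ff n (j.val + 1) := fun _ => rfl
  rw [Finset.sum_congr rfl (fun j _ => this j),
    tri n (ff n) (by simp [ff]) (by unfold ff; push_cast; ring) i]
  unfold ff
  push_cast
  rw [Pi.one_apply]
  ring

lemma hinv (n : ℕ) : (cartanMatrixA n)⁻¹ = BB n := Matrix.inv_eq_right_inv (hCB n)

lemma hBC (n : ℕ) : BB n * cartanMatrixA n = 1 := mul_eq_one_comm.mp (hCB n)

lemma hinv_one (n : ℕ) : (cartanMatrixA n)⁻¹.mulVec 1 = xv n := by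
  conv_lhs => rw [← hCx n]
  rw [Matrix.mulVec_mulVec, hinv, hBC, Matrix.one_mulVec]

lemma s1 (n : ℕ) : ∑ i ∈ Finset.range n, ((i:ℚ)+1) = n*(n+1)/2 := by
  induction n with
  | zero => simp
  | succ n ih => rw [Finset.sum_range_succ, ih]; push_cast; ring

lemma sum_main (n : ℕ) :
    ∑ i ∈ Finset.range n, ((i:ℚ)+1)*(((n:ℕ):ℚ)-i) = (n:ℚ)*(n+1)*(n+2)/6 := by
  induction n with
  | zero => simp
  | succ n ih =>
    have he : ∀ i ∈ Finset.range (n+1),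
        ((i:ℚ)+1)*((((n+1:ℕ)):ℚ)-i) = ((i:ℚ)+1)*(((n:ℕ):ℚ)-i) + ((i:ℚ)+1) := by
      intro i _; push_cast; ring
    rw [Finset.sum_congr rfl he, Finset.sum_add_distrib, Finset.sum_range_succ, ih, s1]
    push_cast; ring

lemma sum_xv (n : ℕ) : ∑ i, xv n i = (n : ℚ) * (n + 1) * (n + 2) / 12 := by
  rw [show (∑ i, xv n i) = ∑ i : Fin n, ff n (i.val+1) from rfl,
    Fin.sum_univ_eq_sum_range (fun m => ff n (m+1))]
  have he : ∀ m ∈ Finset.range n, ff n (m+1) = ((m:ℚ)+1)*(((n:ℕ):ℚ)-m)/2 := by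
    intro m _; unfold ff; push_cast; ring
  rw [Finset.sum_congr rfl he, ← Finset.sum_div, sum_main]
  ring

/-- For every positive `n`, the sum of all entries of the inverse of the
Cartan matrix `C` of type `Aₙ` equals `n(n+1)(n+2)/12`; equivalently, for
`v = (1/(n+1)) C⁻¹ 𝟙` one has `(1/2) vᵀ C v = n(n+2)/(24(n+1))`. -/
theorem cartanMatrixA_inv_entry_sum (n : ℕ) (hn : 0 < n) :
    (∑ i, ∑ j, (cartanMatrixA n)⁻¹ i j) = (n : ℚ) * (n + 1) * (n + 2) / 12 ∧
    ∀ v : Fin n → ℚ,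
      v = ((n : ℚ) + 1)⁻¹ • (cartanMatrixA n)⁻¹.mulVec 1 →
      (1 / 2 : ℚ) * (v ⬝ᵥ (cartanMatrixA n).mulVec v) =
        (n : ℚ) * (n + 2) / (24 * ((n : ℚ) + 1)) := by
  have hsum : (∑ i, ∑ j, (cartanMatrixA n)⁻¹ i j) = ∑ i, xv n i := by
    rw [← hinv_one n]
    refine Finset.sum_congr rfl fun i _ => ?_
    simp [Matrix.mulVec, dotProduct]
  constructor
  · rw [hsum, sum_xv]
  · intro v hv
    rw [hv, hinv_one n]
    have hne : ((n : ℚ) + 1) ≠ 0 := by positivity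
    rw [Matrix.mulVec_smul, hCx n, smul_dotProduct, dotProduct_smul]
    have : xv n ⬝ᵥ (1 : Fin n → ℚ) = ∑ i, xv n i := by simp [dotProduct]
    rw [this, sum_xv]
    simp only [smul_eq_mul]
    field_simp
    ring
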